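/- For odd n and common individual competence p with 1/2 < p < 1, the strict-majority probability P(n,p) is strictly greater than p for all n ≥ 3, i.e., the majority vote amplifies any individual competence strictly above 1/2. -/

import Mathlib

noncomputable def Pmaj (n : ℕ) (p : ℝ) : ℝ :=
  ∑ i ∈ Finset.Ioc (n / 2) n, (n.choose i : ℝ) * p ^ i * (1 - p) ^ (n - i)

lemma Pmaj_odd (k : ℕ) (p : ℝ) :
    Pmaj (2 * k + 1) p =
      ∑ j ∈ Finset.range (k + 1),
        ((2 * k + 1).choose (k + 1 + j) : ℝ) * p ^ (k + 1 + j) * (1 - p) ^ (k - j) := by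
  unfold Pmaj
  rw [show (2 * k + 1) / 2 = k by omega, ← Finset.Ico_add_one_add_one_eq_Ioc,
    Finset.sum_Ico_eq_sum_range]
  rw [show 2 * k + 1 + 1 - (k + 1) = k + 1 by omega]
  refine Finset.sum_congr rfl fun j hj => ?_
  rw [show 2 * k + 1 - (k + 1 + j) = k - j by omega]

lemma Pmaj_step (k : ℕ) (p : ℝ) :
    Pmaj (2 * (k + 1) + 1) p =
      Pmaj (2 * k + 1) p +
        ((2 * k + 1).choose k : ℝ) * (p * (1 - p)) ^ (k + 1) * (2 * p - 1) := by
  rw [Pmaj_odd (k + 1), Pmaj_odd k]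
  -- Pascal twice
  have pascal : ∀ j, ((2 * (k + 1) + 1).choose (k + 1 + 1 + j) : ℝ) =
      ((2 * k + 1).choose (k + j) : ℝ) + 2 * ((2 * k + 1).choose (k + 1 + j) : ℝ)
        + ((2 * k + 1).choose (k + 2 + j) : ℝ) := by
    intro j
    have e1 : (2 * (k + 1) + 1).choose (k + 1 + 1 + j)
        = (2 * k + 2).choose (k + 1 + j) + (2 * k + 2).choose (k + 2 + j) := by
      rw [show 2 * (k + 1) + 1 = (2 * k + 2) + 1 from by ring,
        show k + 1 + 1 + j = (k + 1 + j) + 1 from by ring]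
      rw [Nat.choose_succ_succ]
    have e2 : (2 * k + 2).choose (k + 1 + j)
        = (2 * k + 1).choose (k + j) + (2 * k + 1).choose (k + 1 + j) := by
      rw [show 2 * k + 2 = (2 * k + 1) + 1 from rfl,
        show k + 1 + j = (k + j) + 1 from by ring]
      rw [Nat.choose_succ_succ]
    have e3 : (2 * k + 2).choose (k + 2 + j)
        = (2 * k + 1).choose (k + 1 + j) + (2 * k + 1).choose (k + 2 + j) := by
      rw [show 2 * k + 2 = (2 * k + 1) + 1 from rfl,
        show k + 2 + j = (k + 1 + j) + 1 from by ring]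
      rw [Nat.choose_succ_succ]
    rw [e1, e2, e3]
    push_cast
    ring
  have hLHS : ∑ j ∈ Finset.range (k + 1 + 1),
      ((2 * (k + 1) + 1).choose (k + 1 + 1 + j) : ℝ) * p ^ (k + 1 + 1 + j) *
        (1 - p) ^ (k + 1 - j)
      = (∑ j ∈ Finset.range (k + 2),
          ((2 * k + 1).choose (k + j) : ℝ) * p ^ (k + 2 + j) * (1 - p) ^ (k + 1 - j))
        + 2 * (∑ j ∈ Finset.range (k + 2),
          ((2 * k + 1).choose (k + 1 + j) : ℝ) * p ^ (k + 2 + j) * (1 - p) ^ (k + 1 - j))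
        + (∑ j ∈ Finset.range (k + 2),
          ((2 * k + 1).choose (k + 2 + j) : ℝ) * p ^ (k + 2 + j) * (1 - p) ^ (k + 1 - j)) := by
    rw [Finset.mul_sum, ← Finset.sum_add_distrib, ← Finset.sum_add_distrib]
    refine Finset.sum_congr rfl fun j hj => ?_
    rw [pascal j, show k + 1 + 1 + j = k + 2 + j from by ring]
    ring
  rw [hLHS]
  set S : ℝ := ∑ j ∈ Finset.range (k + 1),
      ((2 * k + 1).choose (k + 1 + j) : ℝ) * p ^ (k + 1 + j) * (1 - p) ^ (k - j) with hS
  have hA : (∑ j ∈ Finset.range (k + 2),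
      ((2 * k + 1).choose (k + j) : ℝ) * p ^ (k + 2 + j) * (1 - p) ^ (k + 1 - j))
      = p ^ 2 * (((2 * k + 1).choose k : ℝ) * p ^ k * (1 - p) ^ (k + 1) + S) := by
    rw [Finset.sum_range_succ' _ (k + 1), hS, mul_add, Finset.mul_sum,
      add_comm (p ^ 2 * (((2 * k + 1).choose k : ℝ) * p ^ k * (1 - p) ^ (k + 1)))]
    congr 1
    · refine Finset.sum_congr rfl fun j hj => ?_
      rw [show k + (j + 1) = k + 1 + j from by ring,
        show k + 1 - (j + 1) = k - j from by omega,
        show k + 2 + (j + 1) = (k + 1 + j) + 2 from by ring]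
      ring
    · simp only [Nat.add_zero, Nat.sub_zero]
      ring
  have hB : (∑ j ∈ Finset.range (k + 2),
      ((2 * k + 1).choose (k + 1 + j) : ℝ) * p ^ (k + 2 + j) * (1 - p) ^ (k + 1 - j))
      = p * (1 - p) * S := by
    rw [Finset.sum_range_succ]
    rw [show (2 * k + 1).choose (k + 1 + (k + 1)) = 0 from
      Nat.choose_eq_zero_of_lt (by omega)]
    simp only [Nat.cast_zero, zero_mul, add_zero]
    rw [hS, Finset.mul_sum]
    refine Finset.sum_congr rfl fun j hj => ?_
    have hj' : j ≤ k := by simpa [Nat.lt_succ_iff] using hj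
    rw [show k + 1 - j = (k - j) + 1 from by omega,
      show k + 2 + j = (k + 1 + j) + 1 from by ring]
    ring
  have hC : (∑ j ∈ Finset.range (k + 2),
      ((2 * k + 1).choose (k + 2 + j) : ℝ) * p ^ (k + 2 + j) * (1 - p) ^ (k + 1 - j))
      = (1 - p) ^ 2 * (S - ((2 * k + 1).choose (k + 1) : ℝ) * p ^ (k + 1) * (1 - p) ^ k) := by
    rw [Finset.sum_range_succ, Finset.sum_range_succ]
    rw [show (2 * k + 1).choose (k + 2 + (k + 1)) = 0 from
      Nat.choose_eq_zero_of_lt (by omega),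
      show (2 * k + 1).choose (k + 2 + k) = 0 from
      Nat.choose_eq_zero_of_lt (by omega)]
    simp only [Nat.cast_zero, zero_mul, add_zero]
    rw [hS, Finset.sum_range_succ' _ k]
    simp only [Nat.add_zero, Nat.sub_zero]
    rw [add_sub_cancel_right, Finset.mul_sum]
    refine Finset.sum_congr rfl fun j hj => ?_
    have hj' : j < k := by simpa using hj
    rw [show k + 1 + (j + 1) = k + 2 + j from by ring,
      show k - (j + 1) = k - 1 - j from by omega,
      show k + 1 - j = (k - 1 - j) + 2 from by omega]
    ring
  rw [hA, hB, hC]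
  have hsym : ((2 * k + 1).choose (k + 1) : ℝ) = ((2 * k + 1).choose k : ℝ) := by
    rw [show k + 1 = 2 * k + 1 - k from by omega, Nat.choose_symm (by omega)]
  rw [hsym, mul_pow]
  ring

theorem majority_amplifies (n : ℕ) (hn : Odd n) (h3 : 3 ≤ n)
    (p : ℝ) (hp : 1 / 2 < p) (hp1 : p < 1) :
    p < Pmaj n p := by
  obtain ⟨k, hk⟩ := hn
  have hk1 : 1 ≤ k := by omega
  subst hk
  clear h3
  induction k with
  | zero => omega
  | succ m ih =>
    have hpos : 0 < p := by linarith
    rcases Nat.eq_or_lt_of_le hk1 with h1 | h1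
    · -- base case: n = 3
      have hm : m = 0 := by omega
      subst hm
      have h3 : Pmaj 3 p = 3 * p ^ 2 * (1 - p) + p ^ 3 := by
        unfold Pmaj
        rw [show Finset.Ioc (3 / 2) 3 = {2, 3} from rfl]
        rw [Finset.sum_pair (by norm_num)]
        norm_num
      rw [show 2 * 1 + 1 = 3 from rfl, h3]
      nlinarith [mul_pos (mul_pos hpos (by linarith : (0:ℝ) < 2 * p - 1))
        (by linarith : (0:ℝ) < 1 - p)]
    · have hm1 : 1 ≤ m := by omega
      have ihm := ih hm1
      rw [Pmaj_step m p]
      have hc : 0 < ((2 * m + 1).choose m : ℝ) := by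
        exact_mod_cast Nat.choose_pos (by omega)
      have hpq : 0 < (p * (1 - p)) ^ (m + 1) :=
        pow_pos (mul_pos hpos (by linarith)) _
      nlinarith [mul_pos (mul_pos hc hpq) (by linarith : (0:ℝ) < 2 * p - 1)]
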